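/- arXiv:2002.04257 — 9 statements merged into one kernel-verified Lean document; each statement's English description precedes it below -/
import Mathlib

section
/- (Birkhoff's representation theorem) Every complete lattice L is order-isomorphic to the concept lattice of the polarity (L, L, ≤), where ≤ is the lattice order of L. -/
/-- Birkhoff's representation theorem: every complete lattice `L` is order-isomorphic to
the concept lattice of the polarity `(L, L, ≤)`. -/
theorem completeLattice_orderIso_conceptLattice (L : Type*) [CompleteLattice L] :
    Nonempty (L ≃o Concept L L (· ≤ ·)) := by
  refine ⟨{
    toFun := fun l => ⟨Set.Iic l, Set.Ici l, ?_, ?_⟩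
    invFun := fun c => sSup c.extent
    left_inv := ?_
    right_inv := ?_
    map_rel_iff' := ?_ }⟩
  · ext x
    simp only [upperPolar, Set.mem_Iic, Set.mem_Ici, Set.mem_setOf_eq]
    constructor
    · intro h; exact h Set.self_mem_Iic
    · intro h a ha; exact ha.trans h
  · ext a
    simp only [lowerPolar, Set.mem_Iic, Set.mem_Ici, Set.mem_setOf_eq]
    constructor
    · intro h; exact h Set.self_mem_Ici
    · intro h x hx; exact h.trans hx
  · intro l; exact csSup_Iic
  · intro c
    ext x
    · simp only [Set.mem_Iic]
      constructor
      · intro hx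
        have : x ∈ lowerPolar (· ≤ ·) c.intent := by
          intro y hy
          have : sSup c.extent ≤ y := sSup_le fun a ha => by
            have := c.upperPolar_extent ▸ hy
            exact this ha
          exact hx.trans this
        rwa [c.lowerPolar_intent] at this
      · intro hx
        exact le_sSup hx
  · intro a b
    simp only [Equiv.coe_fn_mk]
    constructor
    · intro h
      have : (Set.Iic a : Set L) ⊆ Set.Iic b := h
      simpa using this le_rfl
    · intro h
      exact Set.Iic_subset_Iic.2 h
end

section
/- Let (Z, E) be a reflexive graph whose relation E is also transitive (i.e., E is a preorder). Then the concept lattice of the associated polarity (Z, Z, I_{Eᶜ}) satisfies the completely distributive law. -/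
universe u v

section aux

variable {Z : Type*} {E : Z → Z → Prop}

private lemma concept_fst_upset (htrans : Transitive E)
    (c : Concept Z Z (fun a x => ¬ E a x)) {a b : Z}
    (ha : a ∈ c.extent) (hab : E a b) : b ∈ c.extent := by
  rw [← c.lowerPolar_intent] at ha ⊢
  intro x hx hbx
  exact ha hx (htrans hab hbx)

private lemma fst_sSup (hrefl : Reflexive E) (htrans : Transitive E)
    (S : Set (Concept Z Z (fun a x => ¬ E a x))) :
    (sSup S).extent = ⋃ c ∈ S, c.extent := by
  apply Set.Subset.antisymm
  · intro a ha
    by_contra hna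
    simp only [Set.mem_iUnion] at hna
    push_neg at hna
    have hmem : a ∈ ⋂ c ∈ S, (c : Concept Z Z (fun a x => ¬ E a x)).intent := by
      simp only [Set.mem_iInter]
      intro c hc
      rw [← c.upperPolar_extent]
      intro b hb hba
      exact hna c hc (concept_fst_upset htrans c hb hba)
    exact ha hmem (hrefl a)
  · refine Set.iUnion₂_subset fun c hc => ?_
    exact Concept.extent_subset_extent_iff.2 (le_sSup hc)

private lemma fst_iSup' (hrefl : Reflexive E) (htrans : Transitive E)
    {α : Sort*} (g : α → Concept Z Z (fun a x => ¬ E a x)) :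
    (⨆ j, g j).extent = ⋃ j, (g j).extent := by
  rw [← sSup_range, fst_sSup hrefl htrans]
  simp [Set.biUnion_range]

private lemma fst_iInf' {α : Sort*} (g : α → Concept Z Z (fun a x => ¬ E a x)) :
    (⨅ j, g j).extent = ⋂ j, (g j).extent := by
  have : (sInf (Set.range g)).extent = ⋂ c ∈ Set.range g, c.extent := rfl
  rw [← sInf_range, this]
  simp [Set.biInter_range]

end aux

/-- For a reflexive and transitive graph `(Z, E)`, the concept lattice of the associated
polarity `(Z, Z, I_{Eᶜ})` satisfies the completely distributive law. -/
theorem conceptLattice_completelyDistrib_of_transitive {Z : Type*} (E : Z → Z → Prop)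
    (hrefl : Reflexive E) (htrans : Transitive E)
    (ι : Type u) (κ : ι → Type v)
    (f : (i : ι) → κ i → Concept Z Z (fun a x => ¬ E a x)) :
    ⨅ i, ⨆ j, f i j = ⨆ g : (i : ι) → κ i, ⨅ i, f i (g i) := by
  apply Concept.ext
  simp only [fst_iSup' hrefl htrans, fst_iInf']
  exact iInf_iSup_eq (f := fun i j => (f i j).extent)
end

section
/- Let (Z, E) be a reflexive graph whose relation E is antisymmetric (z E z' and z' E z imply z = z'), and suppose the concept lattice of the associated polarity (Z, Z, I_{Eᶜ}) satisfies the completely distributive law. Then E is transitive. -/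
universe u v

open Set

section Aux

variable {Z : Type*} (E : Z → Z → Prop)

/-- The concept generated by the object `t`. -/
def gammaC (t : Z) : Concept Z Z (fun a x => ¬ E a x) where
  extent := {u | ∀ w, E u w → E t w}
  intent := {w | ¬ E t w}
  upperPolar_extent := by
    ext w
    constructor
    · intro h
      exact h (a := t) (fun w h => h)
    · intro hw u hu hE
      exact hw (hu _ hE)
  lowerPolar_intent := by
    ext u
    constructor
    · intro h w hEuw
      by_contra h'
      exact h h' hEuw
    · intro hu w hw hEuw
      exact hw (hu _ hEuw)

/-- The concept generated by the attribute `t`. -/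
def muC (t : Z) : Concept Z Z (fun a x => ¬ E a x) where
  extent := {u | ¬ E u t}
  intent := {w | ∀ u, ¬ E u t → ¬ E u w}
  upperPolar_extent := by
    ext w
    constructor
    · intro h u hu
      exact h hu
    · intro h u hu
      exact h u hu
  lowerPolar_intent := by
    ext u
    constructor
    · intro h
      exact h (b := t) (fun u h' => h')
    · intro hu w hw
      exact hw u hu

variable {r : Z → Z → Prop}

lemma fst_iSup {J : Type*} (c : J → Concept Z Z r) :
    (⨆ j, c j).extent = lowerPolar r (⋂ j, (c j).intent) := by
  exact Concept.extent_iSup c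

lemma fst_iInf {J : Type*} (c : J → Concept Z Z r) :
    (⨅ j, c j).extent = ⋂ j, (c j).extent := by
  exact Concept.extent_iInf c

lemma snd_iInf {J : Type*} (c : J → Concept Z Z r) :
    (⨅ j, c j).intent = upperPolar r (⋂ j, (c j).extent) := by
  exact Concept.intent_iInf c

end Aux

/-- If `(Z, E)` is a reflexive, antisymmetric graph whose associated concept lattice
satisfies the completely distributive law, then `E` is transitive. -/
theorem transitive_of_conceptLattice_completelyDistrib {Z : Type*} (E : Z → Z → Prop)
    (hrefl : Reflexive E)
    (hanti : ∀ z z' : Z, E z z' → E z' z → z = z')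
    (hdist : ∀ (ι : Type u) (κ : ι → Type v)
      (f : (i : ι) → κ i → Concept Z Z (fun a x => ¬ E a x)),
      ⨅ i, ⨆ j, f i j = ⨆ g : (i : ι) → κ i, ⨅ i, f i (g i)) :
    Transitive E := by
  intro a b c hab hbc
  by_contra hac
  set r : Z → Z → Prop := fun a x => ¬ E a x with hr
  -- the family
  let f : ULift.{u} Bool → ULift.{v} Bool → Concept Z Z r :=
    fun i j => match i.down, j.down with
      | false, _ => gammaC E b
      | true, true => gammaC E a
      | true, false => muC E b
  have key := hdist (ULift.{u} Bool) (fun _ => ULift.{v} Bool) f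
  -- b belongs to the extent of the LHS
  have hL : b ∈ (⨅ i, ⨆ j, f i j).extent := by
    rw [fst_iInf]
    refine Set.mem_iInter.2 fun i => ?_
    rw [fst_iSup]
    intro w hw
    have hw' := Set.mem_iInter.1 hw
    obtain ⟨i⟩ := i
    cases i with
    | false =>
      have h1 : w ∈ (gammaC E b).intent := hw' ⟨true⟩
      exact h1
    | true =>
      have h1 : w ∈ (gammaC E a).intent := hw' ⟨true⟩
      have h2 : w ∈ (muC E b).intent := hw' ⟨false⟩
      -- h1 : ¬ E a w, h2 : ∀ u, ¬ E u b → ¬ E u w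
      intro hEbw
      have hEwb : E w b := by
        by_contra hwb
        exact h2 w hwb (hrefl w)
      have hwb : w = b := hanti w b hEwb hEbw
      exact h1 (hwb ▸ hab)
  -- b does not belong to the extent of the RHS
  have hR : b ∉ (⨆ g : ULift.{u} Bool → ULift.{v} Bool, ⨅ i, f i (g i)).extent := by
    rw [fst_iSup]
    intro hmem
    have hb : b ∈ ⋂ g : ULift.{u} Bool → ULift.{v} Bool, (⨅ i, f i (g i)).intent := by
      refine Set.mem_iInter.2 fun g => ?_
      rw [snd_iInf]
      intro u hu
      have hu' := Set.mem_iInter.1 hu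
      have hub : u ∈ (gammaC E b).extent := hu' ⟨false⟩
      rcases hg : (g ⟨true⟩).down with _ | _
      · -- μ b case
        have htrue : u ∈ (muC E b).extent := by
          have h := hu' ⟨true⟩
          simp only [f, hg] at h
          exact h
        exact htrue
      · -- γ a case
        have htrue : u ∈ (gammaC E a).extent := by
          have h := hu' ⟨true⟩
          simp only [f, hg] at h
          exact h
        intro hEub
        have hEbu : E b u := hub u (hrefl u)
        have : u = b := hanti u b hEub hEbu
        subst this
        exact hac (htrue c hbc)
    exact (hmem hb) (hrefl b)
  rw [key] at hL
  exact hR hL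
end

section
/- Let (Z, E) be a reflexive graph whose relation E is antisymmetric, and suppose the concept lattice of the associated polarity (Z, Z, I_{Eᶜ}) satisfies the completely distributive law. Then for all z, u ∈ Z: z E u if and only if u_s ≤ z_s in the concept lattice (equivalently, {z}^↑ ⊆ {u}^↑). -/
open Set

universe u v

/-- The object concept `z_s = ({z}^{↑↓}, {z}^↑)` in the polarity associated with a
reflexive graph. -/
def objectConcept {A X : Type*} (I : A → X → Prop) (a : A) : Concept A X I where
  extent := lowerPolar I (upperPolar I {a})
  intent := upperPolar I {a}
  upperPolar_extent := upperPolar_lowerPolar_upperPolar (r := I) {a}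
  lowerPolar_intent := rfl

/-- The attribute concept `x_r = ({x}^↓, {x}^{↓↑})`. -/
def attributeConcept {A X : Type*} (I : A → X → Prop) (x : X) : Concept A X I where
  extent := lowerPolar I {x}
  intent := upperPolar I (lowerPolar I {x})
  upperPolar_extent := rfl
  lowerPolar_intent := lowerPolar_upperPolar_lowerPolar (r := I) {x}

theorem mem_objectConcept_fst {A X : Type*} (I : A → X → Prop) (a : A) :
    a ∈ (objectConcept I a).extent := fun _x hx => hx rfl

theorem objectConcept_le_of_mem {A X : Type*} {I : A → X → Prop} {a : A}
    {c : Concept A X I} (h : a ∈ c.extent) : objectConcept I a ≤ c := by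
  rw [← Concept.extent_subset_extent_iff]
  have hsub : c.intent ⊆ upperPolar I {a} := by
    intro x hx b hb
    rw [mem_singleton_iff] at hb
    subst hb
    rw [← c.upperPolar_extent] at hx
    exact hx h
  calc (objectConcept I a).extent = lowerPolar I (upperPolar I {a}) := rfl
    _ ⊆ lowerPolar I c.intent := lowerPolar_anti _ hsub
    _ = c.extent := c.lowerPolar_intent

/-- Binary meet-distributivity inequality extracted from the completely distributive law. -/
theorem inf_sup_le_of_dist {Z : Type*} (E : Z → Z → Prop)
    (hdist : ∀ (ι : Type u) (κ : ι → Type v)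
      (f : (i : ι) → κ i → Concept Z Z (fun a x => ¬ E a x)),
      ⨅ i, ⨆ j, f i j = ⨆ g : (i : ι) → κ i, ⨅ i, f i (g i))
    (a b c : Concept Z Z (fun a x => ¬ E a x)) :
    a ⊓ (b ⊔ c) ≤ (a ⊓ b) ⊔ (a ⊓ c) := by
  set f : ULift.{u} Bool → ULift.{v} Bool → Concept Z Z (fun a x => ¬ E a x) :=
    fun i j => if i.down then (if j.down then b else c) else a with hf
  have h1 : a ⊓ (b ⊔ c) ≤ ⨅ i, ⨆ j, f i j := by
    apply le_iInf
    intro i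
    rcases i with ⟨_ | _⟩
    · exact le_trans inf_le_left (le_iSup (f ⟨false⟩) ⟨true⟩)
    · refine le_trans inf_le_right (sup_le ?_ ?_)
      · exact le_iSup (f ⟨true⟩) ⟨true⟩
      · exact le_iSup (f ⟨true⟩) ⟨false⟩
  have h2 : (⨆ g : (i : ULift.{u} Bool) → ULift.{v} Bool, ⨅ i, f i (g i))
      ≤ (a ⊓ b) ⊔ (a ⊓ c) := by
    apply iSup_le
    intro g
    have ha : (⨅ i, f i (g i)) ≤ a := by
      refine le_trans (iInf_le _ ⟨false⟩) ?_
      simp [hf]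
    have hbc : (⨅ i, f i (g i)) ≤ b ⊔ c ∧
        ((g ⟨true⟩).down = true → (⨅ i, f i (g i)) ≤ b) ∧
        ((g ⟨true⟩).down = false → (⨅ i, f i (g i)) ≤ c) := by
      refine ⟨?_, ?_, ?_⟩
      · refine le_trans (iInf_le _ ⟨true⟩) ?_
        rcases hg : (g ⟨true⟩).down
        · simp [hf, hg, le_sup_right]
        · simp [hf, hg, le_sup_left]
      · intro hg
        refine le_trans (iInf_le _ ⟨true⟩) ?_
        simp [hf, hg]
      · intro hg
        refine le_trans (iInf_le _ ⟨true⟩) ?_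
        simp [hf, hg]
    rcases hg : (g ⟨true⟩).down
    · exact le_trans (le_inf ha (hbc.2.2 hg)) le_sup_right
    · exact le_trans (le_inf ha (hbc.2.1 hg)) le_sup_left
  calc a ⊓ (b ⊔ c) ≤ ⨅ i, ⨆ j, f i j := h1
    _ = ⨆ g : (i : ULift.{u} Bool) → ULift.{v} Bool, ⨅ i, f i (g i) :=
      hdist (ULift.{u} Bool) (fun _ => ULift.{v} Bool) f
    _ ≤ (a ⊓ b) ⊔ (a ⊓ c) := h2

/-- If `(Z, E)` is a reflexive, antisymmetric graph whose associated concept lattice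
satisfies the completely distributive law, then `z E u` iff `u_s ≤ z_s`. -/
theorem rel_iff_objectConcept_le {Z : Type*} (E : Z → Z → Prop)
    (hrefl : Reflexive E)
    (hanti : ∀ z z' : Z, E z z' → E z' z → z = z')
    (hdist : ∀ (ι : Type u) (κ : ι → Type v)
      (f : (i : ι) → κ i → Concept Z Z (fun a x => ¬ E a x)),
      ⨅ i, ⨆ j, f i j = ⨆ g : (i : ι) → κ i, ⨅ i, f i (g i)) :
    ∀ z u : Z, E z u ↔
      objectConcept (fun a x => ¬ E a x) u ≤ objectConcept (fun a x => ¬ E a x) z := by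
  set I : Z → Z → Prop := fun a x => ¬ E a x with hI
  intro z u
  constructor
  · -- hard direction
    intro hEzu
    by_cases hmem : u ∈ (objectConcept I z).extent
    · exact objectConcept_le_of_mem hmem
    · exfalso
      set us := objectConcept I u with hus
      set zs := objectConcept I z with hzs
      set ur := attributeConcept I u with hur
      -- Step 1: us ≤ zs ⊔ ur
      have step1 : us ≤ zs ⊔ ur := by
        apply objectConcept_le_of_mem
        rw [Concept.extent_sup]
        intro t ht
        obtain ⟨ht1, ht2⟩ := ht
        -- ht1 : t ∈ zs.intent = upperPolar I {z}, ht2 : t ∈ ur.intent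
        intro hut
        by_cases htu : E t u
        · have : t = u := hanti t u htu hut
          subst this
          exact ht1 (mem_singleton z) hEzu
        · -- t ∈ ur.intent = upperPolar I (lowerPolar I {u}); t ∈ lowerPolar I {u}
          have htt : t ∈ lowerPolar I ({u} : Set Z) := by
            intro b hb
            rw [mem_singleton_iff] at hb
            subst hb
            exact htu
          exact ht2 htt (hrefl t)
      -- Step 2: distributivity
      have step2 : us ≤ (us ⊓ zs) ⊔ (us ⊓ ur) := by
        have := inf_sup_le_of_dist E hdist us zs ur
        calc us = us ⊓ (zs ⊔ ur) := (inf_eq_left.2 step1).symm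
          _ ≤ (us ⊓ zs) ⊔ (us ⊓ ur) := this
      -- u belongs to the extent of the right-hand side
      have humem : u ∈ ((us ⊓ zs) ⊔ (us ⊓ ur)).extent := by
        rw [← Concept.extent_subset_extent_iff] at step2
        exact step2 (mem_objectConcept_fst I u)
      rw [Concept.extent_sup] at humem
      -- u belongs to both intents
      have hmem1 : u ∈ (us ⊓ zs).intent := by
        rw [Concept.intent_inf]
        intro a ha
        obtain ⟨ha1, ha2⟩ := ha
        -- ha1 : a ∈ us.extent, ha2 : a ∈ zs.extent
        intro hau
        -- show E u a
        have hua : E u a := by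
          by_contra hua
          have hain : a ∈ upperPolar I ({u} : Set Z) := by
            intro b hb
            rw [mem_singleton_iff] at hb
            subst hb
            exact hua
          exact ha1 hain (hrefl a)
        have : a = u := hanti a u hau hua
        subst this
        exact hmem ha2
      have hmem2 : u ∈ (us ⊓ ur).intent := by
        rw [Concept.intent_inf]
        intro a ha
        exact ha.2 rfl
      exact humem ⟨hmem1, hmem2⟩ (hrefl u)
  · -- easy direction
    intro h
    by_contra hzu
    have huz : u ∈ (objectConcept I z).intent := fun b hb => by
      rw [mem_singleton_iff] at hb; subst hb; exact hzu
    have : (objectConcept I z).intent ⊆ (objectConcept I u).intent :=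
      Concept.intent_subset_intent_iff.2 h
    exact this huz rfl (hrefl u)
end

section
/- Let (A, X, I) be a polarity and R ⊆ A × X an I-compatible relation. Then for every formal concept c of (A, X, I), the pair (R^{(0)}[intent(c)], (R^{(0)}[intent(c)])^↑) is a formal concept, and the operation [R] thus defined on the concept lattice preserves arbitrary meets: for every family (c_i)_{i∈ι} of concepts, [R](⨅ i, c_i) = ⨅ i, [R]c_i. -/
open Set

universe u

section aux
variable {A X : Type*} {I R : A → X → Prop}

lemma extentClosure_eq_biInter (Y : Set X) :
    lowerPolar R Y = ⋂ x ∈ Y, {a : A | R a x} := by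
  ext a; simp [lowerPolar, mem_iInter]

lemma stable_extentClosure
    (hR1 : ∀ x : X, lowerPolar I (upperPolar I {a : A | R a x}) = {a : A | R a x})
    (Y : Set X) :
    lowerPolar I (upperPolar I (lowerPolar R Y)) = lowerPolar R Y := by
  refine Subset.antisymm ?_ (subset_lowerPolar_upperPolar _ _)
  rw [extentClosure_eq_biInter (R := R) Y]
  refine subset_iInter₂ fun x hx => ?_
  rw [← hR1 x]
  exact lowerPolar_anti _ (upperPolar_anti _ (biInter_subset_of_mem hx))

lemma extentClosure_closure
    (hR2 : ∀ a : A, upperPolar I (lowerPolar I {x : X | R a x}) = {x : X | R a x})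
    (Y : Set X) :
    lowerPolar R (upperPolar I (lowerPolar I Y)) = lowerPolar R Y := by
  ext a
  constructor
  · intro h x hx
    exact h (subset_upperPolar_lowerPolar _ _ hx)
  · intro h x hx
    have hY : Y ⊆ {x : X | R a x} := fun y hy => h hy
    have : upperPolar I (lowerPolar I Y) ⊆ {x : X | R a x} := by
      rw [← hR2 a]
      exact upperPolar_anti _ (lowerPolar_anti _ hY)
    exact this hx

end aux

/-- For a polarity `(A, X, I)` and an `I`-compatible relation `R ⊆ A × X`, for every
concept `c` the pair `(R⁽⁰⁾[intent c], (R⁽⁰⁾[intent c])^↑)` is a formal concept, and the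
operation `[R]` thus defined preserves arbitrary meets. -/
theorem box_wellDefined_and_meet_preserving {A X : Type*} (I : A → X → Prop)
    (R : A → X → Prop)
    (hR1 : ∀ x : X, lowerPolar I (upperPolar I {a : A | R a x}) = {a : A | R a x})
    (hR2 : ∀ a : A, upperPolar I (lowerPolar I {x : X | R a x}) = {x : X | R a x}) :
    ∃ box : Concept A X I → Concept A X I,
      (∀ c : Concept A X I,
        (box c).extent = lowerPolar R c.intent ∧
        (box c).intent = upperPolar I (lowerPolar R c.intent)) ∧
      ∀ (ι : Type u) (f : ι → Concept A X I), box (⨅ i, f i) = ⨅ i, box (f i) := by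
  set box : Concept A X I → Concept A X I := fun c =>
    ⟨lowerPolar R c.intent, upperPolar I (lowerPolar R c.intent), rfl,
      stable_extentClosure hR1 _⟩ with hbox
  refine ⟨box, fun c => ⟨rfl, rfl⟩, fun ι f => ?_⟩
  apply Concept.ext
  have h1 : (⨅ i, f i).intent = upperPolar I (lowerPolar I (⋃ i, (f i).intent)) := by
    show upperPolar I (⋂ c ∈ Set.range f, c.extent) = _
    rw [biInter_range]
    simp_rw [← Concept.lowerPolar_intent]
    rw [← lowerPolar_iUnion]
  have h2 : (box (⨅ i, f i)).extent = lowerPolar R (⋃ i, (f i).intent) := by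
    show lowerPolar R (⨅ i, f i).intent = _
    rw [h1, extentClosure_closure hR2]
  have h3 : (⨅ i, box (f i)).extent = ⋂ i, lowerPolar R ((f i).intent) := by
    show (⋂ c ∈ Set.range (fun i => box (f i)), c.extent) = _
    rw [biInter_range]
  rw [h2, h3, lowerPolar_iUnion]
end

section
/- Let (A, X, I) be a polarity and R ⊆ X × A a compatible relation (for every a ∈ A the set {x ∈ X | x R a} is Galois-stable and for every x ∈ X the set {a ∈ A | x R a} is Galois-stable). Then for every formal concept c of (A, X, I), the pair ((R^{(0)}[extent(c)])^↓, R^{(0)}[extent(c)]) is a formal concept, where R^{(0)}[B] := {x ∈ X | ∀ a ∈ B, x R a} for B ⊆ A, and the operation ⟨R⟩ thus defined on the concept lattice preserves arbitrary joins: for every family (c_i)_{i∈ι} of concepts, ⟨R⟩(⨆ i, c_i) = ⨆ i, ⟨R⟩c_i. -/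
open Set

universe u

section Aux

variable {A X : Type*} {I : A → X → Prop} {R : X → A → Prop}

lemma aux_mem_extentClosure {B : Set A} {x : X} :
    x ∈ lowerPolar R B ↔ B ⊆ {a : A | R x a} := Iff.rfl

lemma aux_key1
    (hR1 : ∀ a : A, upperPolar I (lowerPolar I {x : X | R x a}) = {x : X | R x a})
    (B : Set A) :
    lowerPolar R B = upperPolar I (⋃ a ∈ B, lowerPolar I {x : X | R x a}) := by
  rw [upperPolar_iUnion₂]
  simp only [hR1]
  ext x
  simp [lowerPolar, Set.mem_iInter]

lemma aux_closed
    (hR1 : ∀ a : A, upperPolar I (lowerPolar I {x : X | R x a}) = {x : X | R x a})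
    (B : Set A) :
    upperPolar I (lowerPolar I (lowerPolar R B)) = lowerPolar R B := by
  rw [aux_key1 hR1, upperPolar_lowerPolar_upperPolar]

lemma aux_key2
    (hR2 : ∀ x : X, lowerPolar I (upperPolar I {a : A | R x a}) = {a : A | R x a})
    (B : Set A) :
    lowerPolar R (lowerPolar I (upperPolar I B)) = lowerPolar R B := by
  apply subset_antisymm
  · exact lowerPolar_anti R (subset_lowerPolar_upperPolar I B)
  · intro x hx
    rw [aux_mem_extentClosure] at hx ⊢
    calc lowerPolar I (upperPolar I B)
        ⊆ lowerPolar I (upperPolar I {a : A | R x a}) :=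
          lowerPolar_anti I (upperPolar_anti I hx)
      _ = {a : A | R x a} := hR2 x

end Aux

/-- For a polarity `(A, X, I)` and a compatible relation `R ⊆ X × A`, for every concept
`c` the pair `((R⁽⁰⁾[extent c])^↓, R⁽⁰⁾[extent c])` is a formal concept, and the
operation `⟨R⟩` thus defined preserves arbitrary joins. -/
theorem diamond_wellDefined_and_join_preserving {A X : Type*} (I : A → X → Prop)
    (R : X → A → Prop)
    (hR1 : ∀ a : A, upperPolar I (lowerPolar I {x : X | R x a}) = {x : X | R x a})
    (hR2 : ∀ x : X, lowerPolar I (upperPolar I {a : A | R x a}) = {a : A | R x a}) :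
    ∃ dia : Concept A X I → Concept A X I,
      (∀ c : Concept A X I,
        (dia c).extent = lowerPolar I (lowerPolar R c.extent) ∧
        (dia c).intent = lowerPolar R c.extent) ∧
      ∀ (ι : Type u) (f : ι → Concept A X I), dia (⨆ i, f i) = ⨆ i, dia (f i) := by
  refine ⟨fun c =>
    { extent := lowerPolar I (lowerPolar R c.extent)
      intent := lowerPolar R c.extent
      upperPolar_extent := aux_closed hR1 c.extent
      lowerPolar_intent := rfl }, fun c => ⟨rfl, rfl⟩, fun ι f => ?_⟩
  apply Concept.ext'
  show lowerPolar R (⨆ i, f i).extent = _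
  have h1 : (⨆ i, f i).extent = lowerPolar I (⋂ i, (f i).intent) := by
    rw [iSup, Concept.extent_sSup]
    ext a
    simp
  have h2 : (⋂ i, (f i).intent) = upperPolar I (⋃ i, (f i).extent) := by
    rw [upperPolar_iUnion]
    exact iInter_congr fun i => (f i).upperPolar_extent.symm
  rw [h1, h2, aux_key2 hR2, lowerPolar_iUnion]
  rw [iSup, Concept.intent_sSup]
  ext x
  simp
end

section
/- (Correspondence for factivity) Let (A, X, I) be a polarity and R ⊆ A × X an I-compatible relation. Then R^{(0)}[intent(c)] ⊆ extent(c) holds for every formal concept c of (A, X, I) if and only if R ⊆ I. -/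
open Set

/-- Correspondence for factivity: for a polarity `(A, X, I)` and an `I`-compatible
relation `R ⊆ A × X`, `R⁽⁰⁾[intent c] ⊆ extent c` holds for every concept `c` iff
`R ⊆ I`. -/
theorem factivity_correspondence {A X : Type*} (I : A → X → Prop) (R : A → X → Prop)
    (hR1 : ∀ x : X, lowerPolar I (upperPolar I {a : A | R a x}) = {a : A | R a x})
    (hR2 : ∀ a : A, upperPolar I (lowerPolar I {x : X | R a x}) = {x : X | R a x}) :
    (∀ c : Concept A X I, lowerPolar R c.intent ⊆ c.extent) ↔
      ∀ a : A, ∀ x : X, R a x → I a x := by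
  constructor
  · intro h a x hRax
    -- concept generated by {x}
    set c : Concept A X I :=
      { extent := lowerPolar I {x}
        intent := upperPolar I (lowerPolar I {x})
        upperPolar_extent := rfl
        lowerPolar_intent := lowerPolar_upperPolar_lowerPolar I {x} } with hc
    have hsub : c.intent ⊆ {y : X | R a y} := by
      have h1 : ({x} : Set X) ⊆ {y : X | R a y} := by
        simpa using hRax
      calc c.intent = upperPolar I (lowerPolar I {x}) := rfl
        _ ⊆ upperPolar I (lowerPolar I {y : X | R a y}) :=
            upperPolar_anti I (lowerPolar_anti I h1)
        _ = {y : X | R a y} := hR2 a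
    have ha : a ∈ lowerPolar R c.intent := fun y hy => hsub hy
    have := h c ha
    exact this (mem_singleton x)
  · intro h c a ha
    rw [← c.lowerPolar_intent]
    exact fun y hy => h a y (ha hy)
end

section
/- (Correspondence for omniscience) Let (A, X, I) be a polarity and R ⊆ A × X any relation. Then extent(c) ⊆ R^{(0)}[intent(c)] holds for every formal concept c of (A, X, I) if and only if I ⊆ R. -/
open Set

/-- Correspondence for omniscience: for a polarity `(A, X, I)` and any relation
`R ⊆ A × X`, `extent c ⊆ R⁽⁰⁾[intent c]` holds for every concept `c` iff `I ⊆ R`. -/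
theorem omniscience_correspondence {A X : Type*} (I : A → X → Prop) (R : A → X → Prop) :
    (∀ c : Concept A X I, c.extent ⊆ lowerPolar R c.intent) ↔
      ∀ a : A, ∀ x : X, I a x → R a x := by
  constructor
  · intro H a x hax
    set c : Concept A X I :=
      ⟨lowerPolar I (upperPolar I {a}), upperPolar I {a},
        upperPolar_lowerPolar_upperPolar I {a},
        rfl⟩ with hc
    have ha : a ∈ c.extent := subset_lowerPolar_upperPolar I {a} (mem_singleton a)
    have hx : x ∈ c.intent := fun b hb => by rw [mem_singleton_iff] at hb; subst hb; exact hax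
    exact H c ha hx
  · intro h c a ha x hx
    have : I a x := by
      rw [← c.upperPolar_extent] at hx
      exact hx ha
    exact h a x this
end

section
/- (Correspondence for factivity on graph-based frames) Let (Z, E) be a reflexive graph and R ⊆ Z × Z a relation compatible with the associated polarity (Z, Z, I_{Eᶜ}), i.e., for every y ∈ Z the set {a ∈ Z | ¬(a R y)} is Galois-stable and for every b ∈ Z the set {x ∈ Z | ¬(b R x)} is Galois-stable. Then R^{[0]}[intent(c)] ⊆ extent(c) holds for every formal concept c of (Z, Z, I_{Eᶜ}), where R^{[0]}[Y] := {a ∈ Z | ∀ x ∈ Y, ¬(a R x)}, if and only if E ⊆ R. -/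
open Set

/-- Correspondence for factivity on graph-based frames: for a reflexive graph `(Z, E)`
and a compatible relation `R ⊆ Z × Z`, `R^{[0]}[intent c] ⊆ extent c` holds for every
concept `c` of the associated polarity `(Z, Z, I_{Eᶜ})` iff `E ⊆ R`. -/
theorem graph_factivity_correspondence {Z : Type*} (E : Z → Z → Prop)
    (hrefl : Reflexive E) (R : Z → Z → Prop)
    (hR1 : ∀ y : Z,
      lowerPolar (fun a x => ¬ E a x)
          (upperPolar (fun a x => ¬ E a x) {a : Z | ¬ R a y}) = {a : Z | ¬ R a y})
    (hR2 : ∀ b : Z,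
      upperPolar (fun a x => ¬ E a x)
          (lowerPolar (fun a x => ¬ E a x) {x : Z | ¬ R b x}) = {x : Z | ¬ R b x}) :
    (∀ c : Concept Z Z (fun a x => ¬ E a x),
        lowerPolar (fun a x => ¬ R a x) c.intent ⊆ c.extent) ↔
      ∀ z z' : Z, E z z' → R z z' := by
  constructor
  · intro h z z' hE
    by_contra hnR
    set c : Concept Z Z (fun a x => ¬ E a x) :=
      { extent := lowerPolar (fun a x => ¬ E a x) {x : Z | ¬ R z x}
        intent := {x : Z | ¬ R z x}
        upperPolar_extent := hR2 z
        lowerPolar_intent := rfl }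
    have hz : z ∈ lowerPolar (fun a x => ¬ R a x) c.intent := fun x hx => hx
    exact h c hz hnR hE
  · intro h c a ha
    have hfst := c.lowerPolar_intent
    have : a ∈ lowerPolar (fun a x => ¬ E a x) c.intent := fun y hy hEa => ha hy (h a y hEa)
    rw [hfst] at this
    exact this
end
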